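/- If s, s' ∈ (−π, π] and there exists P ∈ SU(1,1) with P⁻¹·Λ_e(s)·P = Λ_e(s'), then s = s'. In particular, for s ∈ (0, π) the matrices Λ_e(s) and Λ_e(−s) are not conjugate in SU(1,1): for every elliptic element A of SU(1,1) there is a unique s ∈ (−π, π] such that A is conjugate in SU(1,1) to Λ_e(s). -/

import Mathlib

open Complex Matrix

noncomputable section

/-- The matrix `e₃ = diag(1,-1)`. -/
def e3 : Matrix (Fin 2) (Fin 2) ℂ := !![1, 0; 0, -1]

/-- `SU(1,1)`: matrices of determinant 1 with `S e₃ S* = e₃`. -/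
def SU11 (S : Matrix (Fin 2) (Fin 2) ℂ) : Prop :=
  S.det = 1 ∧ S * e3 * Sᴴ = e3

/-- `Λ_e(t) = [[e^{it},0],[0,e^{-it}]]`. -/
def Λe (t : ℝ) : Matrix (Fin 2) (Fin 2) ℂ :=
  !![Complex.exp (Complex.I * t), 0; 0, Complex.exp (-(Complex.I * t))]

/-- For `s, s' ∈ (−π, π]`, if `Λ_e(s)` and `Λ_e(s')` are conjugate in
`SU(1,1)` then `s = s'`; in particular the representative `Λ_e(s)` of an
elliptic conjugacy class of `SU(1,1)` is unique. -/
theorem elliptic_representative_unique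
    (s s' : ℝ) (hs₁ : -Real.pi < s) (hs₂ : s ≤ Real.pi)
    (hs₁' : -Real.pi < s') (hs₂' : s' ≤ Real.pi)
    (P : Matrix (Fin 2) (Fin 2) ℂ) (hP : SU11 P)
    (h : P⁻¹ * Λe s * P = Λe s') : s = s' := by
  obtain ⟨hdet, hrel⟩ := hP
  have hPinv : P * P⁻¹ = 1 := Matrix.mul_nonsing_inv P (by simp [hdet])
  have h2 : Λe s * P = P * Λe s' := by
    calc Λe s * P = P * P⁻¹ * Λe s * P := by rw [hPinv, Matrix.one_mul]
      _ = P * (P⁻¹ * Λe s * P) := by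
          rw [Matrix.mul_assoc, Matrix.mul_assoc, Matrix.mul_assoc]
      _ = P * Λe s' := by rw [h]
  have h00 : (Λe s * P) 0 0 = (P * Λe s') 0 0 := by rw [h2]
  simp [Λe, Matrix.mul_apply, Fin.sum_univ_two] at h00
  -- h00 : exp (I*s) * P 0 0 = P 0 0 * exp (I*s')
  by_cases ha : P 0 0 = 0
  · -- contradiction with SU(1,1) relation
    exfalso
    have hr00 : (P * e3 * Pᴴ) 0 0 = e3 0 0 := by rw [hrel]
    simp [e3, Matrix.mul_apply, Fin.sum_univ_two, ha] at hr00
    -- hr00 : -(P 0 1 * conj (P 0 1)) = 1  (up to form)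
    have hb : (Complex.normSq (P 0 1) : ℂ) = -1 := by
      rw [← Complex.mul_conj]
      linear_combination -hr00
    have hb' : Complex.normSq (P 0 1) = -1 := by exact_mod_cast hb
    have := Complex.normSq_nonneg (P 0 1)
    linarith
  · have hexp : Complex.exp (Complex.I * s) = Complex.exp (Complex.I * s') := by
      have := h00
      field_simp at this
      rcases mul_eq_mul_right_iff.mp (by linear_combination h00 :
        Complex.exp (Complex.I * s) * P 0 0 = Complex.exp (Complex.I * s') * P 0 0) with h' | h'
      · exact h'
      · exact absurd h' ha
    rw [Complex.exp_eq_exp_iff_exists_int] at hexp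
    obtain ⟨n, hn⟩ := hexp
    have hsc : (s : ℂ) = s' + 2 * Real.pi * n := by
      have hI : (Complex.I : ℂ) ≠ 0 := Complex.I_ne_zero
      apply mul_left_cancel₀ hI
      rw [hn]; ring
    have hsr : s = s' + 2 * Real.pi * n := by exact_mod_cast hsc
    have hπ := Real.pi_pos
    have hn1 : (n : ℝ) < 1 := by nlinarith
    have hn2 : (-1 : ℝ) < n := by nlinarith
    have : n = 0 := by
      have h1 : n < 1 := by exact_mod_cast hn1
      have h2 : -1 < n := by exact_mod_cast hn2
      omega
    rw [hsr, this]; push_cast; ring
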